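/- Strategy extraction for Q-SOS: given a Q-SOS refutation Σ_{p∈enc(φ)} q_p·p + Σ_u q_u·(1-2u) + q + 1 = 0 of a false QBF Q.φ, the universal strategy that on each universal variable u plays (1 - sign(q_u))/2 (evaluated on the preceding variables, with sign(0)=+1) is a countermodel: every play of the evaluation game in which the universal variables are set according to this strategy ends in an assignment falsifying φ. -/
import Mathlib


open MvPolynomial

/-- The rational value of a Boolean. -/
noncomputable def bval (b : Bool) : ℚ := if b then 1 else 0

/-- A Q-SOS refutation of a QBF over variables `Fin n` (in prefix order), with
existential variables marked by `E` and matrix encoded by the polynomials in `P`: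
an identity `Σ_{p∈P} q_p·p + Σ_u q_u·(1-2u) + Σ s² + 1 = 0` where each `q_u`
(for universal `u`) only mentions variables left of `u`. -/
structure QSOS (n : ℕ) (E : Fin n → Bool) (P : Finset (MvPolynomial (Fin n) ℚ)) where
  qp : MvPolynomial (Fin n) ℚ → MvPolynomial (Fin n) ℚ
  qu : Fin n → MvPolynomial (Fin n) ℚ
  sq : Multiset (MvPolynomial (Fin n) ℚ)
  hvars : ∀ u : Fin n, E u = false → ∀ v ∈ (qu u).vars, v < u
  huz : ∀ u : Fin n, E u = true → qu u = 0
  hid : ∑ p ∈ P, qp p * p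
      + ∑ u : Fin n, qu u * (1 - 2 * X u)
      + (sq.map fun s => s ^ 2).sum + 1 = 0

/-- Q-size of a Q-SOS refutation: the number of monomials in the `q_u` polynomials. -/
noncomputable def QSOS.qsize {n : ℕ} {E : Fin n → Bool}
    {P : Finset (MvPolynomial (Fin n) ℚ)} (π : QSOS n E P) : ℕ :=
  ∑ u : Fin n, (π.qu u).support.card

/-- Existential Q-degree of a Q-SOS refutation: the largest number of existential
variables (with multiplicity) in a monomial of some `q_u`. -/
noncomputable def QSOS.exdeg {n : ℕ} {E : Fin n → Bool}
    {P : Finset (MvPolynomial (Fin n) ℚ)} (π : QSOS n E P) : ℕ :=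
  Finset.univ.sup fun u : Fin n =>
    (π.qu u).support.sup fun m => ∑ i ∈ Finset.univ.filter (fun i => E i = true), m i

/-- Strategy extraction for Q-SOS: given a Q-SOS refutation, the universal strategy
playing `u := (1 - sign(q_u))/2` (i.e. `u = 1` exactly when `q_u` evaluates negatively
on the earlier variables, with `sign 0 = +1`) is a countermodel: every play following it
falsifies the matrix, i.e. some polynomial of `P` does not vanish. -/
theorem stmt_13 (n : ℕ) (E : Fin n → Bool) (P : Finset (MvPolynomial (Fin n) ℚ))
    (π : QSOS n E P) :
    ∀ α : Fin n → Bool,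
      (∀ u : Fin n, E u = false →
        α u = decide (eval (fun i => bval (α i)) (π.qu u) < 0)) →
      ∃ p ∈ P, eval (fun i => bval (α i)) p ≠ 0 := by
  intro α hα
  by_contra h
  push_neg at h
  set f : MvPolynomial (Fin n) ℚ →+* ℚ := eval (fun i => bval (α i)) with hf
  have h0 := congrArg f π.hid
  simp only [map_add, map_sum, map_mul, map_one, map_zero, map_sub, map_ofNat,
    map_multiset_sum, Multiset.map_map, Function.comp, map_pow, eval_X] at h0
  have h1 : ∑ p ∈ P, f (π.qp p) * f p = 0 := by
    apply Finset.sum_eq_zero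
    intro p hp
    rw [h p hp, mul_zero]
  have h2 : 0 ≤ ∑ u : Fin n, f (π.qu u) * (1 - 2 * bval (α u)) := by
    apply Finset.sum_nonneg
    intro u _
    cases hE : E u with
    | true => simp [π.huz u hE]
    | false =>
      have := hα u hE
      rcases lt_or_ge (f (π.qu u)) 0 with hv | hv
      · have : α u = true := by simp [this, hv]
        simp only [this, bval]
        norm_num
        linarith
      · have : α u = false := by simp [this, not_lt.mpr hv]
        simp only [this, bval]
        norm_num
        linarith
  have h3 : 0 ≤ (π.sq.map fun s => f s ^ 2).sum := by
    apply Multiset.sum_nonneg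
    intro x hx
    obtain ⟨s, _, rfl⟩ := Multiset.mem_map.mp hx
    positivity
  have hX : ∀ x : Fin n, f (X x) = bval (α x) := fun x => by rw [hf]; exact eval_X x
  simp only [hX] at h0
  rw [h1] at h0
  linarith [h0]
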